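/- arXiv:quant-ph/0109146 — 2 statements merged into one kernel-verified Lean document; each statement's English description precedes it below -/
import Mathlib

section
/- Let H_A and H_B be finite-dimensional complex inner product spaces, and let Ψ, Φ be unit vectors in H_A ⊗ H_B. If the partial traces over H_B of the projectors onto Ψ and Φ are equal, then there exists a unitary operator U on H_B such that Ψ = (1 ⊗ U) Φ. -/
open scoped BigOperators Kronecker ComplexOrder
open Matrix

namespace DEsp

variable {m n ι : Type*}

/-- Outer product `|v⟩⟨v|` as a matrix: `(outer v) i j = v i * conj (v j)`. -/
noncomputable def outer [Fintype m] (v : m → ℂ) : Matrix m m ℂ :=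
  Matrix.of fun i j => v i * star (v j)

/-- Tensor product of vectors. -/
noncomputable def tens (u : m → ℂ) (v : n → ℂ) : m × n → ℂ := fun p => u p.1 * v p.2

/-- Partial trace over the second factor. -/
noncomputable def ptraceB [Fintype n] (ρ : Matrix (m × n) (m × n) ℂ) : Matrix m m ℂ :=
  Matrix.of fun i i' => ∑ k, ρ (i, k) (i', k)

/-- Partial trace over the first factor. -/
noncomputable def ptraceA [Fintype m] (ρ : Matrix (m × n) (m × n) ℂ) : Matrix n n ℂ :=
  Matrix.of fun j j' => ∑ k, ρ (k, j) (k, j')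

/-- Hermitian inner product (conjugate-linear in the first slot). -/
noncomputable def inn [Fintype m] (u v : m → ℂ) : ℂ := ∑ i, star (u i) * v i

/-- `v` is a unit vector. -/
def unitVec [Fintype m] (v : m → ℂ) : Prop := inn v v = 1

/-- An orthonormal family of vectors. -/
def orthonormal [Fintype m] [DecidableEq ι] (f : ι → m → ℂ) : Prop :=
  ∀ j k, inn (f j) (f k) = if j = k then 1 else 0

/-- A density operator: positive semidefinite with trace 1. -/
def IsDensity [Fintype m] (ρ : Matrix m m ℂ) : Prop := ρ.PosSemidef ∧ ρ.trace = 1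

end DEsp

namespace DEsp

/-- Rows of `X` combined linearly, as a linear map into `EuclideanSpace`. -/
private noncomputable def rowMap {m n : Type*} [Fintype m] [Fintype n]
    (X : m × n → ℂ) : (m → ℂ) →ₗ[ℂ] EuclideanSpace ℂ n where
  toFun c := (WithLp.equiv 2 (n → ℂ)).symm fun j => ∑ i, c i * X (i, j)
  map_add' c c' := by
    ext j
    simp [add_mul, Finset.sum_add_distrib]
  map_smul' a c := by
    ext j
    simp [Finset.mul_sum, mul_assoc]

private lemma rowMap_apply {m n : Type*} [Fintype m] [Fintype n]
    (X : m × n → ℂ) (c : m → ℂ) (j : n) :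
    rowMap X c j = ∑ i, c i * X (i, j) := rfl

private lemma gram_eq {m n : Type*} [Fintype m] [Fintype n]
    (X : m × n → ℂ) (c c' : m → ℂ) :
    (∑ j, (starRingEnd ℂ) (∑ i, c i * X (i, j)) * (∑ i', c' i' * X (i', j))) =
      ∑ i, ∑ i', (starRingEnd ℂ) (c i) * c' i' * ptraceB (outer X) i' i := by
  simp only [ptraceB, outer, Matrix.of_apply, map_sum, _root_.map_mul, Finset.sum_mul,
    Finset.mul_sum, starRingEnd_apply]
  rw [Finset.sum_comm]
  conv_rhs => rw [Finset.sum_comm]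
  refine Finset.sum_congr rfl fun i _ => ?_
  rw [Finset.sum_comm]
  refine Finset.sum_congr rfl fun i' _ => ?_
  refine Finset.sum_congr rfl fun j _ => ?_
  ring


/-- GHJW Lemma: purifications with equal `B`-partial traces are related by a local
unitary on `H_B`. -/
theorem stmt0 {m n : Type*} [Fintype m] [Fintype n] [DecidableEq m] [DecidableEq n]
    (Ψ Φ : m × n → ℂ) (hΨ : unitVec Ψ) (hΦ : unitVec Φ)
    (h : ptraceB (outer Ψ) = ptraceB (outer Φ)) :
    ∃ U : Matrix n n ℂ, U ∈ Matrix.unitaryGroup n ℂ ∧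
      Ψ = ((1 : Matrix m m ℂ) ⊗ₖ U) *ᵥ Φ := by
  classical
  set f := rowMap Φ with hf
  set g := rowMap Ψ with hg
  -- equal inner products
  have hinner : ∀ c c' : m → ℂ,
      (inner ℂ (f c) (f c') : ℂ) = inner ℂ (g c) (g c') := by
    intro c c'
    simp only [PiLp.inner_apply, RCLike.inner_apply', hf, hg, rowMap_apply]
    rw [gram_eq Φ c c', gram_eq Ψ c c', h]
  have hnorm : ∀ c : m → ℂ, ‖f c‖ = ‖g c‖ := by
    intro c
    rw [norm_eq_sqrt_re_inner (𝕜 := ℂ), norm_eq_sqrt_re_inner (𝕜 := ℂ), hinner c c]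
  have hker : LinearMap.ker f ≤ LinearMap.ker g := by
    intro c hc
    rw [LinearMap.mem_ker] at hc ⊢
    have hn := hnorm c
    rw [hc, norm_zero] at hn
    exact norm_eq_zero.mp hn.symm
  let e := f.quotKerEquivRange
  let g' : ((m → ℂ) ⧸ LinearMap.ker f) →ₗ[ℂ] EuclideanSpace ℂ n :=
    (LinearMap.ker f).liftQ g hker
  let L0 : (LinearMap.range f) →ₗ[ℂ] EuclideanSpace ℂ n := g'.comp e.symm.toLinearMap
  have hL0 : ∀ c : m → ℂ, L0 ⟨f c, LinearMap.mem_range_self f c⟩ = g c := by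
    intro c
    have h1 : e.symm ⟨f c, LinearMap.mem_range_self f c⟩ = Submodule.Quotient.mk c := by
      apply e.injective
      rw [e.apply_symm_apply]
      exact Subtype.ext (f.quotKerEquivRange_apply_mk c)
    simp only [L0, LinearMap.comp_apply, LinearEquiv.coe_toLinearMap, h1, g',
      Submodule.liftQ_apply]
  let L : (LinearMap.range f) →ₗᵢ[ℂ] EuclideanSpace ℂ n :=
    ⟨L0, by
      rintro ⟨x, hx⟩
      obtain ⟨c, rfl⟩ := hx
      rw [hL0 c]
      exact (hnorm c).symm⟩
  let W := (L.extend).toLinearIsometryEquiv rfl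
  have hW : ∀ c : m → ℂ, W (f c) = g c := by
    intro c
    have : W (f c) = L.extend ((⟨f c, LinearMap.mem_range_self f c⟩ : LinearMap.range f) :
        EuclideanSpace ℂ n) := rfl
    rw [this, LinearIsometry.extend_apply]
    exact hL0 c
  let U : Matrix n n ℂ := Matrix.toEuclideanLin.symm W.toLinearEquiv.toLinearMap
  have hU : ∀ v : EuclideanSpace ℂ n, U *ᵥ v = W v := by
    intro v
    have : Matrix.toEuclideanLin U v = W v := by
      simp [U]
    exact congrArg WithLp.ofLp this
  have hcol : ∀ (i j : n), U i j = W (EuclideanSpace.single j (1:ℂ)) i := by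
    intro i j
    have h0 := congrFun (hU (EuclideanSpace.single j (1:ℂ))) i
    rw [← h0]
    simp [Matrix.mulVec, dotProduct, EuclideanSpace.single_apply, mul_ite]
  refine ⟨U, ?_, ?_⟩
  · rw [Matrix.mem_unitaryGroup_iff']
    ext j k
    have : (star U * U) j k =
        (inner ℂ (W (EuclideanSpace.single j (1:ℂ))) (W (EuclideanSpace.single k (1:ℂ))) : ℂ) := by
      simp only [PiLp.inner_apply, RCLike.inner_apply', Matrix.mul_apply, Matrix.star_apply,
        Matrix.conjTranspose_apply]
      refine Finset.sum_congr rfl fun i _ => ?_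
      rw [hcol i j, hcol i k]
      rfl
    rw [this, LinearIsometryEquiv.inner_map_map]
    simp [EuclideanSpace.inner_single_left, EuclideanSpace.single_apply, Matrix.one_apply,
      eq_comm]
  · funext p
    obtain ⟨i, j⟩ := p
    have h1 : Ψ (i, j) = g (Pi.single i 1) j := by
      rw [hg, rowMap_apply]
      simp [Pi.single_apply]
    have h2 : g (Pi.single i (1:ℂ)) = U *ᵥ (f (Pi.single i 1)) := by
      rw [hU, hW]
    rw [h1, h2]
    show ∑ j', U j j' * f (Pi.single i 1) j' = _
    have h3 : ∀ j' : n, f (Pi.single i (1:ℂ)) j' = Φ (i, j') := by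
      intro j'
      rw [hf, rowMap_apply]
      simp [Pi.single_apply]
    simp only [h3]
    show _ = ∑ p' : m × n, ((1 : Matrix m m ℂ) ⊗ₖ U) (i, j) p' * Φ p'
    rw [Fintype.sum_prod_type]
    simp [Matrix.kroneckerMap_apply, Matrix.one_apply, ite_mul]

end DEsp
end

section
/- Let Ψ be a unit vector in H_A ⊗ H_B with reduced density operator ρ_A = Tr_B |Ψ⟩⟨Ψ|. For any expression ρ_A = Σ_{j=1}^m f_j |φ_j⟩⟨φ_j| as a convex combination of rank-one projectors onto unit vectors φ_j in H_A, with f_j > 0, Σ f_j = 1, and m ≤ dim H_B, there exists an orthonormal family (c_j)_{j=1}^m in H_B such that Ψ = Σ_{j=1}^m √(f_j) φ_j ⊗ c_j. -/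
open scoped BigOperators Kronecker ComplexOrder
open Matrix

open scoped InnerProductSpace
open Module

section Key

variable {H K V : Type*}
  [NormedAddCommGroup H] [InnerProductSpace ℂ H] [FiniteDimensional ℂ H]
  [NormedAddCommGroup K] [InnerProductSpace ℂ K] [FiniteDimensional ℂ K]
  [NormedAddCommGroup V] [InnerProductSpace ℂ V] [FiniteDimensional ℂ V]

lemma ghjw_key (hdim : finrank ℂ V ≤ finrank ℂ K)
    (a : H →ₗ[ℂ] K) (b : H →ₗ[ℂ] V)
    (h : ∀ x y : H, ⟪a x, a y⟫_ℂ = ⟪b x, b y⟫_ℂ) :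
    ∃ J : V →ₗᵢ[ℂ] K, ∀ x, J (b x) = a x := by
  classical
  set E := LinearMap.range b with hE
  set d := finrank ℂ E with hd
  let u : OrthonormalBasis (Fin d) ℂ E := stdOrthonormalBasis ℂ E
  have hx : ∀ i : Fin d, ∃ x : H, b x = (u i : V) := fun i => (u i).2
  choose x hxx using hx
  let v : Fin d → K := fun i => a (x i)
  have huv : ∀ i j : Fin d, ⟪((u i : V)), ((u j : V))⟫_ℂ = if i = j then 1 else 0 := by
    intro i j
    rw [← Submodule.coe_inner]
    exact orthonormal_iff_ite.mp u.orthonormal i j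
  have hvon : Orthonormal ℂ v := by
    rw [orthonormal_iff_ite]
    intro i j
    show ⟪a (x i), a (x j)⟫_ℂ = _
    rw [h, hxx, hxx, huv]
  have hdV : d ≤ finrank ℂ V := hd ▸ Submodule.finrank_le E
  have hdK : d ≤ finrank ℂ K := hdV.trans hdim
  -- extend u to an orthonormal basis β of V
  let uV : Fin (finrank ℂ V) → V := fun j => if hj : (j : ℕ) < d then (u ⟨j, hj⟩ : V) else 0
  have huVon : Orthonormal ℂ (Set.restrict {j : Fin (finrank ℂ V) | (j : ℕ) < d} uV) := by
    rw [orthonormal_iff_ite]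
    rintro ⟨i, hi⟩ ⟨j, hj⟩
    simp only [Set.mem_setOf_eq] at hi hj
    change ⟪(if hi' : (i : ℕ) < d then (u ⟨i, hi'⟩ : V) else 0),
      (if hj' : (j : ℕ) < d then (u ⟨j, hj'⟩ : V) else 0)⟫_ℂ = _
    rw [dif_pos hi, dif_pos hj]
    rw [huv]
    exact if_congr (by simp [Fin.ext_iff, Subtype.ext_iff]) rfl rfl
  obtain ⟨β, hβ⟩ := huVon.exists_orthonormalBasis_extension_of_card_eq (by simp)
  -- extend v to an orthonormal basis γ of K
  let vK : Fin (finrank ℂ K) → K := fun l => if hl : (l : ℕ) < d then v ⟨l, hl⟩ else 0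
  have hvKon : Orthonormal ℂ (Set.restrict {l : Fin (finrank ℂ K) | (l : ℕ) < d} vK) := by
    rw [orthonormal_iff_ite]
    rintro ⟨i, hi⟩ ⟨j, hj⟩
    simp only [Set.mem_setOf_eq] at hi hj
    change ⟪(if hi' : (i : ℕ) < d then v ⟨i, hi'⟩ else 0),
      (if hj' : (j : ℕ) < d then v ⟨j, hj'⟩ else 0)⟫_ℂ = _
    rw [dif_pos hi, dif_pos hj]
    rw [orthonormal_iff_ite.mp hvon]
    exact if_congr (by simp [Fin.ext_iff, Subtype.ext_iff]) rfl rfl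
  obtain ⟨γ, hγ⟩ := hvKon.exists_orthonormalBasis_extension_of_card_eq (by simp)
  -- basis vectors β j for j ≥ d are orthogonal to E
  have hβperp : ∀ (j : Fin (finrank ℂ V)), d ≤ (j : ℕ) → ∀ e : E, ⟪β j, (e : V)⟫_ℂ = 0 := by
    intro j hj e
    have he : (e : V) = ∑ i, (u.repr e i) • ((u i : V)) := by
      conv_lhs => rw [← u.sum_repr e]
      push_cast
      rfl
    rw [he, inner_sum]
    refine Finset.sum_eq_zero fun i _ => ?_
    rw [inner_smul_right]
    have hβi : β ⟨(i : ℕ), lt_of_lt_of_le i.isLt hdV⟩ = ((u i : V)) := by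
      have h1 := hβ ⟨(i : ℕ), lt_of_lt_of_le i.isLt hdV⟩ (by simpa using i.isLt)
      simpa only [uV, dif_pos i.isLt, Fin.eta] using h1
    rw [← hβi, orthonormal_iff_ite.mp β.orthonormal, if_neg, mul_zero]
    intro hji
    have : (j : ℕ) = (i : ℕ) := by simpa [Fin.ext_iff] using hji
    omega
  -- range a is contained in the span of v
  have hFspan : LinearMap.range a ≤ Submodule.span ℂ (Set.range v) := by
    have hle : Submodule.span ℂ (Set.range v) ≤ LinearMap.range a := by
      rw [Submodule.span_le]
      rintro _ ⟨i, rfl⟩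
      exact ⟨x i, rfl⟩
    have hker : LinearMap.ker a = LinearMap.ker b := by
      ext z
      simp only [LinearMap.mem_ker]
      rw [← inner_self_eq_zero (𝕜 := ℂ) (x := a z), ← inner_self_eq_zero (𝕜 := ℂ) (x := b z), h]
    have h1 : finrank ℂ (LinearMap.range a) = d := by
      have ha := LinearMap.finrank_range_add_finrank_ker a
      have hb := LinearMap.finrank_range_add_finrank_ker b
      rw [hker] at ha
      rw [hd, hE]
      omega
    have h2 : finrank ℂ (Submodule.span ℂ (Set.range v)) = d := by
      rw [finrank_span_eq_card hvon.linearIndependent, Fintype.card_fin]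
    exact le_of_eq (Submodule.eq_of_le_of_finrank_le hle (by rw [h1, h2])).symm
  -- basis vectors γ l for l ≥ d are orthogonal to range a
  have hγperp : ∀ (l : Fin (finrank ℂ K)), d ≤ (l : ℕ) → ∀ z : H, ⟪γ l, a z⟫_ℂ = 0 := by
    intro l hl z
    have hmem : a z ∈ Submodule.span ℂ (Set.range v) := hFspan ⟨z, rfl⟩
    refine Submodule.span_induction (p := fun w _ => ⟪γ l, w⟫_ℂ = 0) ?_ ?_ ?_ ?_ hmem
    case refine_1 =>
      rintro w ⟨i, rfl⟩
      have hγi : γ ⟨(i : ℕ), lt_of_lt_of_le i.isLt hdK⟩ = v i := by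
        have h1 := hγ ⟨(i : ℕ), lt_of_lt_of_le i.isLt hdK⟩ (by simpa using i.isLt)
        simpa only [vK, dif_pos i.isLt, Fin.eta] using h1
      rw [← hγi, orthonormal_iff_ite.mp γ.orthonormal, if_neg]
      intro hli
      have : (l : ℕ) = (i : ℕ) := by simpa [Fin.ext_iff] using hli
      omega
    case refine_2 => exact inner_zero_right _
    case refine_3 => intro w₁ w₂ _ _ ih1 ih2; rw [inner_add_right, ih1, ih2, add_zero]
    case refine_4 => intro r w _ ih; rw [inner_smul_right, ih, mul_zero]
  -- the candidate linear map
  let c : Fin (finrank ℂ V) → K := fun j => γ (Fin.castLE hdim j)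
  have hcon : Orthonormal ℂ c := γ.orthonormal.comp _ (Fin.castLE_injective hdim)
  let J₀ : V →ₗ[ℂ] K := ∑ j, ((innerSL ℂ (β j)).toLinearMap).smulRight (c j)
  have hJ₀ : ∀ y, J₀ y = ∑ j, ⟪β j, y⟫_ℂ • c j := by
    intro y
    simp [J₀, LinearMap.sum_apply, LinearMap.smulRight_apply]
  have hiso : ∀ y z : V, ⟪J₀ y, J₀ z⟫_ℂ = ⟪y, z⟫_ℂ := by
    intro y z
    rw [hJ₀, hJ₀, inner_sum]
    have : ∀ j : Fin (finrank ℂ V),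
        ⟪∑ j', ⟪β j', y⟫_ℂ • c j', ⟪β j, z⟫_ℂ • c j⟫_ℂ = ⟪y, β j⟫_ℂ * ⟪β j, z⟫_ℂ := by
      intro j
      rw [sum_inner]
      rw [Finset.sum_eq_single j]
      · rw [inner_smul_left, inner_smul_right, orthonormal_iff_ite.mp hcon, if_pos rfl,
          mul_one, inner_conj_symm, mul_comm]
      · intro j' _ hj'
        rw [inner_smul_left, inner_smul_right, orthonormal_iff_ite.mp hcon, if_neg hj',
          mul_zero, mul_zero]
      · intro hj; exact absurd (Finset.mem_univ j) hj
    rw [Finset.sum_congr rfl fun j _ => this j]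
    exact β.sum_inner_mul_inner y z
  have hcoef : ∀ (z : H) (j : Fin (finrank ℂ V)), ⟪β j, b z⟫_ℂ = ⟪c j, a z⟫_ℂ := by
    intro z j
    by_cases hj : (j : ℕ) < d
    · have h1 : β j = ((u ⟨(j : ℕ), hj⟩ : V)) := by
        have := hβ j hj
        simpa only [uV, dif_pos hj] using this
      have h2 : c j = v ⟨(j : ℕ), hj⟩ := by
        have := hγ (Fin.castLE hdim j) (by simpa using hj)
        simpa only [vK, Fin.coe_castLE, dif_pos hj] using this
      rw [h1, h2, ← hxx]
      exact (h (x ⟨(j : ℕ), hj⟩) z).symm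
    · rw [hβperp j (le_of_not_gt hj) ⟨b z, LinearMap.mem_range_self b z⟩,
        hγperp (Fin.castLE hdim j) (le_of_not_gt hj) z]
  have hJb : ∀ z : H, J₀ (b z) = a z := by
    intro z
    rw [hJ₀]
    rw [Finset.sum_congr rfl fun j _ => by rw [hcoef z j]]
    have hrepr := γ.sum_repr' (a z)
    conv_rhs => rw [← hrepr]
    rw [← Finset.sum_image (f := fun l => ⟪γ l, a z⟫_ℂ • γ l)
      (g := Fin.castLE hdim) (s := Finset.univ)
      (fun x _ y _ hxy => Fin.castLE_injective hdim hxy)]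
    refine Finset.sum_subset (Finset.subset_univ _) ?_
    intro l _ hl
    have hld : d ≤ (l : ℕ) := by
      by_contra hld
      push_neg at hld
      exact hl (Finset.mem_image.mpr ⟨⟨(l : ℕ), lt_of_lt_of_le hld hdV⟩,
        Finset.mem_univ _, by simp [Fin.ext_iff]⟩)
    rw [hγperp l hld z, zero_smul]
  exact ⟨J₀.isometryOfInner hiso, fun z => by
    rw [LinearMap.coe_isometryOfInner]; exact hJb z⟩

end Key

namespace DEsp

open scoped InnerProductSpace
open Module

/-- GHJW Theorem: any convex decomposition of the reduced density operator is realized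
by an orthonormal family in the ancilla. -/
theorem stmt1 {m n : Type*} [Fintype m] [Fintype n]
    (Ψ : m × n → ℂ) (hΨ : unitVec Ψ)
    (M : ℕ) (hM : M ≤ Fintype.card n)
    (f : Fin M → ℝ) (hf : ∀ j, 0 < f j) (hsum : ∑ j, f j = 1)
    (φ : Fin M → m → ℂ) (hφ : ∀ j, unitVec (φ j))
    (hdec : ptraceB (outer Ψ) = ∑ j, (f j : ℂ) • outer (φ j)) :
    ∃ c : Fin M → n → ℂ, orthonormal c ∧
      Ψ = ∑ j, (Real.sqrt (f j) : ℂ) • tens (φ j) (c j) := by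
  classical
  set B : m → Fin M → ℂ := fun i j => (Real.sqrt (f j) : ℂ) * φ j i with hBdef
  let a : EuclideanSpace ℂ m →ₗ[ℂ] EuclideanSpace ℂ n :=
    { toFun := fun z => WithLp.toLp 2 (fun k => ∑ i, star (Ψ (i, k)) * z i)
      map_add' := fun z w => by
        ext k
        simp [Pi.add_apply, mul_add, Finset.sum_add_distrib]
      map_smul' := fun r z => by
        ext k
        simp [Finset.mul_sum]
        exact Finset.sum_congr rfl fun i _ => by ring }
  let b : EuclideanSpace ℂ m →ₗ[ℂ] EuclideanSpace ℂ (Fin M) :=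
    { toFun := fun z => WithLp.toLp 2 (fun j => ∑ i, star (B i j) * z i)
      map_add' := fun z w => by
        ext j
        simp [Pi.add_apply, mul_add, Finset.sum_add_distrib]
      map_smul' := fun r z => by
        ext j
        simp [Finset.mul_sum]
        exact Finset.sum_congr rfl fun i _ => by ring }
  have ha_apply : ∀ (z : EuclideanSpace ℂ m) (k : n), a z k = ∑ i, star (Ψ (i, k)) * z i :=
    fun z k => rfl
  have hb_apply : ∀ (z : EuclideanSpace ℂ m) (j : Fin M), b z j = ∑ i, star (B i j) * z i :=
    fun z j => rfl
  have hdec' : ∀ i i', (∑ k, Ψ (i, k) * star (Ψ (i', k)))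
      = ∑ j, (f j : ℂ) * (φ j i * star (φ j i')) := by
    intro i i'
    have h0 := Matrix.ext_iff.mpr hdec i i'
    simpa [ptraceB, outer, Matrix.sum_apply, Matrix.smul_apply, smul_eq_mul] using h0
  have hB : ∀ i i', (∑ j, B i j * star (B i' j))
      = ∑ j, (f j : ℂ) * (φ j i * star (φ j i')) := by
    intro i i'
    refine Finset.sum_congr rfl fun j _ => ?_
    have hsq : ((Real.sqrt (f j) : ℂ)) * ((Real.sqrt (f j) : ℂ)) = (f j : ℂ) := by
      rw [← Complex.ofReal_mul, Real.mul_self_sqrt (le_of_lt (hf j))]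
    have hst : star ((Real.sqrt (f j) : ℂ)) = ((Real.sqrt (f j) : ℂ)) := by
      simpa using Complex.conj_ofReal (Real.sqrt (f j))
    calc B i j * star (B i' j)
        = (((Real.sqrt (f j) : ℂ)) * star ((Real.sqrt (f j) : ℂ))) * (φ j i * star (φ j i')) := by
          simp only [hBdef, star_mul']; ring
      _ = (f j : ℂ) * (φ j i * star (φ j i')) := by rw [hst, hsq]
  have hL : ∀ z w : EuclideanSpace ℂ m, ⟪a z, a w⟫_ℂ =
      ∑ i, ∑ i', (star (z i) * w i') * (∑ k, Ψ (i, k) * star (Ψ (i', k))) := by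
    intro z w
    calc ⟪a z, a w⟫_ℂ
        = ∑ k, (∑ i, Ψ (i, k) * star (z i)) * (∑ i', star (Ψ (i', k)) * w i') := by
          simp only [PiLp.inner_apply, RCLike.inner_apply]
          refine Finset.sum_congr rfl fun k _ => ?_
          rw [ha_apply, ha_apply]
          rw [mul_comm]
          congr 1
          rw [map_sum]
          exact Finset.sum_congr rfl fun i _ => by
            rw [starRingEnd_apply, star_mul', star_star]
      _ = ∑ k, ∑ i, ∑ i', (Ψ (i, k) * star (z i)) * (star (Ψ (i', k)) * w i') :=
          Finset.sum_congr rfl fun k _ => Finset.sum_mul_sum _ _ _ _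
      _ = ∑ i, ∑ k, ∑ i', (Ψ (i, k) * star (z i)) * (star (Ψ (i', k)) * w i') :=
          Finset.sum_comm
      _ = ∑ i, ∑ i', ∑ k, (Ψ (i, k) * star (z i)) * (star (Ψ (i', k)) * w i') :=
          Finset.sum_congr rfl fun i _ => Finset.sum_comm
      _ = ∑ i, ∑ i', (star (z i) * w i') * (∑ k, Ψ (i, k) * star (Ψ (i', k))) := by
          refine Finset.sum_congr rfl fun i _ => Finset.sum_congr rfl fun i' _ => ?_
          rw [Finset.mul_sum]
          exact Finset.sum_congr rfl fun k _ => by ring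
  have hR : ∀ z w : EuclideanSpace ℂ m, ⟪b z, b w⟫_ℂ =
      ∑ i, ∑ i', (star (z i) * w i') * (∑ j, B i j * star (B i' j)) := by
    intro z w
    calc ⟪b z, b w⟫_ℂ
        = ∑ j, (∑ i, B i j * star (z i)) * (∑ i', star (B i' j) * w i') := by
          simp only [PiLp.inner_apply, RCLike.inner_apply]
          refine Finset.sum_congr rfl fun j _ => ?_
          rw [hb_apply, hb_apply]
          rw [mul_comm]
          congr 1
          rw [map_sum]
          exact Finset.sum_congr rfl fun i _ => by
            rw [starRingEnd_apply, star_mul', star_star]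
      _ = ∑ j, ∑ i, ∑ i', (B i j * star (z i)) * (star (B i' j) * w i') :=
          Finset.sum_congr rfl fun j _ => Finset.sum_mul_sum _ _ _ _
      _ = ∑ i, ∑ j, ∑ i', (B i j * star (z i)) * (star (B i' j) * w i') :=
          Finset.sum_comm
      _ = ∑ i, ∑ i', ∑ j, (B i j * star (z i)) * (star (B i' j) * w i') :=
          Finset.sum_congr rfl fun i _ => Finset.sum_comm
      _ = ∑ i, ∑ i', (star (z i) * w i') * (∑ j, B i j * star (B i' j)) := by
          refine Finset.sum_congr rfl fun i _ => Finset.sum_congr rfl fun i' _ => ?_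
          rw [Finset.mul_sum]
          exact Finset.sum_congr rfl fun j _ => by ring
  have hab : ∀ z w : EuclideanSpace ℂ m, ⟪a z, a w⟫_ℂ = ⟪b z, b w⟫_ℂ := by
    intro z w
    rw [hL, hR]
    exact Finset.sum_congr rfl fun i _ => Finset.sum_congr rfl fun i' _ => by
      rw [hdec' i i', hB i i']
  have hdims : finrank ℂ (EuclideanSpace ℂ (Fin M)) ≤ finrank ℂ (EuclideanSpace ℂ n) := by
    simpa [finrank_euclideanSpace] using hM
  obtain ⟨J, hJ⟩ := ghjw_key hdims a b hab
  refine ⟨fun j k => star (J (EuclideanSpace.single j (1 : ℂ)) k), ?_, ?_⟩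
  · intro j j'
    have h1 : inn (fun k => star (J (EuclideanSpace.single j (1 : ℂ)) k))
        (fun k => star (J (EuclideanSpace.single j' (1 : ℂ)) k))
        = ⟪J (EuclideanSpace.single j' (1 : ℂ)), J (EuclideanSpace.single j (1 : ℂ))⟫_ℂ := by
      simp only [inn, PiLp.inner_apply, RCLike.inner_apply, starRingEnd_apply, star_star]
    rw [h1, J.inner_map_map, EuclideanSpace.inner_single_left, EuclideanSpace.single_apply]
    by_cases h : j = j'
    · simp [h]
    · rw [if_neg h, if_neg (fun hh => h hh.symm), mul_zero]
  · have hexp : ∀ q : EuclideanSpace ℂ (Fin M),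
        ∑ j, q j • EuclideanSpace.single j (1 : ℂ) = q := by
      intro q
      have h0 := (EuclideanSpace.basisFun (Fin M) ℂ).sum_repr q
      simpa only [EuclideanSpace.basisFun_apply, EuclideanSpace.basisFun_repr] using h0
    funext p
    obtain ⟨i, k⟩ := p
    have h1 : J (b (EuclideanSpace.single i (1 : ℂ))) = a (EuclideanSpace.single i (1 : ℂ)) :=
      hJ _
    have h2 : J (b (EuclideanSpace.single i (1 : ℂ)))
        = ∑ j, (b (EuclideanSpace.single i (1 : ℂ)) j) • J (EuclideanSpace.single j (1 : ℂ)) := by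
      conv_lhs => rw [← hexp (b (EuclideanSpace.single i (1 : ℂ)))]
      rw [map_sum]
      exact Finset.sum_congr rfl fun j _ => by rw [J.map_smul]
    have h3 : a (EuclideanSpace.single i (1 : ℂ)) k = star (Ψ (i, k)) := by
      rw [ha_apply]
      simp [EuclideanSpace.single_apply, mul_ite, mul_one, mul_zero, Finset.sum_ite_eq]
    have h4 : ∀ j, b (EuclideanSpace.single i (1 : ℂ)) j = star (B i j) := by
      intro j
      rw [hb_apply]
      simp [EuclideanSpace.single_apply, mul_ite, mul_one, mul_zero, Finset.sum_ite_eq]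
    have h5 : star (Ψ (i, k))
        = ∑ j, star (B i j) * (J (EuclideanSpace.single j (1 : ℂ)) k) := by
      have h6 := congrArg (fun v => v k) (h1.symm.trans h2)
      rw [h3] at h6
      rw [h6, WithLp.ofLp_sum, Finset.sum_apply]
      exact Finset.sum_congr rfl fun j _ => by rw [h4, PiLp.smul_apply, smul_eq_mul]
    have h7 : Ψ (i, k) = ∑ j, B i j * star (J (EuclideanSpace.single j (1 : ℂ)) k) := by
      calc Ψ (i, k) = star (star (Ψ (i, k))) := (star_star _).symm
        _ = star (∑ j, star (B i j) * (J (EuclideanSpace.single j (1 : ℂ)) k)) := by rw [← h5]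
        _ = ∑ j, B i j * star (J (EuclideanSpace.single j (1 : ℂ)) k) := by
            rw [star_sum]
            exact Finset.sum_congr rfl fun j _ => by rw [star_mul', star_star]
    rw [h7, Finset.sum_apply]
    refine Finset.sum_congr rfl fun j _ => ?_
    simp only [Pi.smul_apply, smul_eq_mul, tens, hBdef]
    ring

end DEsp
end
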